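/- For every real t with 0 < t < 1, setting β = 2·t/5 one has: (i) min (min (1 - (9/4)·β) (β/(4·t))) (1 - β - β/t) ≥ 1/10; (ii) Real.sqrt (max 2 ((1+β)² + 2·β²/t)) ≤ Real.sqrt 228 / 10; and consequently (iii) the quotient of the value in (i) by the value in (ii) is ≥ 1/Real.sqrt 228. In particular, when λ = ν, θ = ζ, σ = 1 and the mesh weight t = h^λ/p^ζ satisfies t < 1, the inf-sup constant γ = ξ₂/ξ₁ obtained from Lemmas 3.3 and 3.4 with |β| = 2t/5 is bounded below by the absolute constant 1/√228, independent of h and p. -/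

import Mathlib

/-- Corollary 3.2: with `σ = 1`, `λ = ν`, `θ = ζ` and mesh weight `t = h^λ/p^ζ < 1`,
choosing `β = 2t/5` the inf-sup constant `γ = ξ₂/ξ₁` is bounded below by `1/√228`. -/
theorem inf_sup_constant_bounded (t : ℝ) (ht0 : 0 < t) (ht1 : t < 1) (β : ℝ)
    (hβ : β = 2 * t / 5) :
    min (min (1 - (9 / 4) * β) (β / (4 * t))) (1 - β - β / t) ≥ 1 / 10 ∧
    Real.sqrt (max 2 ((1 + β) ^ 2 + 2 * β ^ 2 / t)) ≤ Real.sqrt 228 / 10 ∧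
    (min (min (1 - (9 / 4) * β) (β / (4 * t))) (1 - β - β / t)) /
        Real.sqrt (max 2 ((1 + β) ^ 2 + 2 * β ^ 2 / t)) ≥ 1 / Real.sqrt 228 := by
  have ht0' : t ≠ 0 := ne_of_gt ht0
  have hβt : β / t = 2 / 5 := by rw [hβ]; field_simp
  have h1 : min (min (1 - (9 / 4) * β) (β / (4 * t))) (1 - β - β / t) ≥ 1 / 10 := by
    have ha : (1 : ℝ) - (9 / 4) * β ≥ 1 / 10 := by rw [hβ]; nlinarith
    have hb : β / (4 * t) ≥ 1 / 10 := by
      rw [hβ, ge_iff_le, div_le_div_iff₀ (by norm_num) (by positivity)]; nlinarith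
    have hc : (1 : ℝ) - β - β / t ≥ 1 / 10 := by rw [hβt, hβ]; nlinarith
    exact le_min (le_min ha hb) hc
  have hmax : max 2 ((1 + β) ^ 2 + 2 * β ^ 2 / t) ≤ 228 / 100 := by
    have h2' : 2 * β ^ 2 / t = (8 / 25) * t := by rw [hβ]; field_simp; ring
    have : (1 + β) ^ 2 + 2 * β ^ 2 / t ≤ 228 / 100 := by
      rw [h2', hβ]; nlinarith
    exact max_le (by norm_num) this
  have hsqrt : Real.sqrt (228 / 100) = Real.sqrt 228 / 10 := by
    rw [Real.sqrt_div (by norm_num : (0:ℝ) ≤ 228) 100,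
      show (100:ℝ) = 10 ^ 2 by norm_num, Real.sqrt_sq (by norm_num : (0:ℝ) ≤ 10)]
  have h2 : Real.sqrt (max 2 ((1 + β) ^ 2 + 2 * β ^ 2 / t)) ≤ Real.sqrt 228 / 10 :=
    hsqrt ▸ Real.sqrt_le_sqrt hmax
  refine ⟨h1, h2, ?_⟩
  have hs : 0 < Real.sqrt (max 2 ((1 + β) ^ 2 + 2 * β ^ 2 / t)) :=
    Real.sqrt_pos.mpr (lt_of_lt_of_le two_pos (le_max_left _ _))
  have hs228 : (0:ℝ) < Real.sqrt 228 := Real.sqrt_pos.mpr (by norm_num)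
  calc (1:ℝ) / Real.sqrt 228 = (1 / 10) / (Real.sqrt 228 / 10) := by
        field_simp
    _ ≤ _ := div_le_div₀ (le_trans (by norm_num) h1) h1 hs h2
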